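/- For every real x, the iterated series −2 ∑_{m=1}^∞ ∑_{n=1}^{2m−1} (−1)ⁿ / ( (2m−1)(1+x²/4)^(2m−1) ) · (x/2)^(2(2m−n)−1) · C(2m−1, 2n−1) converges and its sum equals arctan(x), where C(a,b) denotes the binomial coefficient. -/

import Mathlib

open Complex Finset

/-- The imaginary part of `(t + I)^(2m+1)` as a binomial-type sum. -/
lemma aux_im (t : ℝ) (m : ℕ) :
    (((t : ℂ) + Complex.I) ^ (2 * m + 1)).im
      = ∑ n ∈ Finset.Icc 1 (m + 1),
          (-1 : ℝ) ^ (n - 1) * t ^ (2 * m + 2 - 2 * n) *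
            ((2 * m + 1).choose (2 * n - 1) : ℝ) := by
  rw [add_pow, Complex.im_sum]
  have him : ∀ k : ℕ, ((t : ℂ) ^ k * Complex.I ^ (2 * m + 1 - k) *
      ((2 * m + 1).choose k : ℂ)).im
      = t ^ k * ((2 * m + 1).choose k : ℝ) * (Complex.I ^ (2 * m + 1 - k)).im := by
    intro k
    rw [mul_right_comm, ← Complex.ofReal_pow, ← Complex.ofReal_natCast, ← Complex.ofReal_mul,
      Complex.im_ofReal_mul]
  simp only [him]
  rw [← Finset.sum_filter_of_ne (p := fun k => Even k)
    (by
      intro k hk hne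
      by_contra hodd
      apply hne
      rw [Finset.mem_range] at hk
      obtain ⟨a, ha⟩ : ∃ a, 2 * m + 1 - k = 2 * a := by
        rcases Nat.even_or_odd k with he | ho
        · exact absurd he hodd
        · obtain ⟨b, hb⟩ := ho; exact ⟨m - b, by omega⟩
      rw [ha, pow_mul, Complex.I_sq]
      have h5 : ((-1 : ℂ)) ^ a = (((-1 : ℝ)) ^ a : ℝ) := by push_cast; ring
      rw [h5, Complex.ofReal_im, mul_zero])]
  refine Finset.sum_nbij' (fun k => m + 1 - k / 2) (fun n => 2 * (m + 1 - n)) ?_ ?_ ?_ ?_ ?_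
  · intro k hk
    simp only [Finset.mem_filter, Finset.mem_range] at hk
    obtain ⟨a, ha⟩ := hk.2
    simp only [Finset.mem_Icc]
    omega
  · intro n hn
    simp only [Finset.mem_Icc] at hn
    simp only [Finset.mem_filter, Finset.mem_range]
    exact ⟨by omega, ⟨m + 1 - n, by omega⟩⟩
  · intro k hk
    simp only [Finset.mem_filter, Finset.mem_range] at hk
    obtain ⟨a, ha⟩ := hk.2
    omega
  · intro n hn
    simp only [Finset.mem_Icc] at hn
    omega
  · intro k hk
    simp only [Finset.mem_filter, Finset.mem_range] at hk
    obtain ⟨a, ha⟩ := hk.2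
    have hk2 : k = 2 * a := by omega
    subst hk2
    have hle : 2 * a ≤ 2 * m + 1 := by omega
    have h1 : 2 * m + 1 - 2 * a = 2 * (m - a) + 1 := by omega
    have h2 : 2 * m + 2 - 2 * (m + 1 - 2 * a / 2) = 2 * a := by omega
    have h3 : 2 * (m + 1 - 2 * a / 2) - 1 = 2 * m + 1 - 2 * a := by omega
    have h4 : m + 1 - 2 * a / 2 - 1 = m - a := by omega
    rw [h1, h2, h3, h4, pow_succ,
      show Complex.I ^ (2 * (m - a)) = ((-1 : ℂ)) ^ (m - a) by rw [pow_mul, Complex.I_sq]]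
    have h5 : ((-1 : ℂ)) ^ (m - a) = (((-1 : ℝ)) ^ (m - a) : ℝ) := by push_cast; ring
    rw [h5, Complex.im_ofReal_mul, Complex.I_im, Nat.choose_symm hle]
    ring

theorem arctan_binomial_series (x : ℝ) :
    HasSum (fun m : ℕ =>
      -2 * ∑ n ∈ Finset.Icc 1 (2 * m + 1),
        (-1 : ℝ) ^ n / ((2 * (m : ℝ) + 1) * (1 + x ^ 2 / 4) ^ (2 * m + 1)) *
          (x / 2) ^ (4 * m + 3 - 2 * n) * (Nat.choose (2 * m + 1) (2 * n - 1) : ℝ))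
      (Real.arctan x) := by
  set t : ℝ := x / 2 with ht
  have hx2 : x = 2 * t := by rw [ht]; ring
  have hr : (0:ℝ) < 1 + t ^ 2 := by positivity
  set Z : ℂ := ((t : ℂ) * ((t : ℂ) + Complex.I)) / ((1 + t ^ 2 : ℝ) : ℂ) with hZ
  have hrC : ((1 + t ^ 2 : ℝ) : ℂ) ≠ 0 := by
    simp only [ne_eq, Complex.ofReal_eq_zero]
    exact hr.ne'
  have habs : ‖Z‖ < 1 := by
    have hsq : ‖Z‖ ^ 2 = t ^ 2 / (1 + t ^ 2) := by
      have h2 : Complex.normSq ((t:ℂ) + Complex.I) = t ^ 2 + 1 := by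
        simp [Complex.normSq_apply]
        ring
      rw [Complex.sq_norm, hZ, map_div₀, map_mul, h2, Complex.normSq_ofReal,
        Complex.normSq_ofReal]
      field_simp
      ring
    have hlt : t ^ 2 / (1 + t ^ 2) < 1 := by
      rw [div_lt_one hr]; nlinarith
    nlinarith [norm_nonneg Z, hsq, hlt]
  have hW : ‖Complex.I * Z‖ < 1 := by
    rw [norm_mul, Complex.norm_I, one_mul]
    exact habs
  have h := (Complex.hasSum_arctan hW).mul_left (-2)
  have h2 := h.mapL Complex.reCLM
  -- identify the summed function
  have key : ∀ m : ℕ, Complex.reCLM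
      (-2 * ((-1) ^ m * (Complex.I * Z) ^ (2 * m + 1) / ((2 * m + 1 : ℕ) : ℂ)))
      = -2 * ∑ n ∈ Finset.Icc 1 (2 * m + 1),
        (-1 : ℝ) ^ n / ((2 * (m : ℝ) + 1) * (1 + x ^ 2 / 4) ^ (2 * m + 1)) *
          (x / 2) ^ (4 * m + 3 - 2 * n) * (Nat.choose (2 * m + 1) (2 * n - 1) : ℝ) := by
    intro m
    have hpow : (Complex.I * Z) ^ (2 * m + 1)
        = (-1) ^ m * Complex.I * Z ^ (2 * m + 1) := by
      rw [mul_pow, pow_succ, pow_mul, Complex.I_sq]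
    have hneg : ((-1 : ℂ)) ^ m * ((-1 : ℂ)) ^ m = 1 := by
      rw [← pow_add]
      exact Even.neg_one_pow ⟨m, by ring⟩
    have hterm : (-2 : ℂ) * ((-1) ^ m * (Complex.I * Z) ^ (2 * m + 1) / ((2 * m + 1 : ℕ) : ℂ))
        = -2 * (Complex.I * Z ^ (2 * m + 1) / ((2 * m + 1 : ℕ) : ℂ)) := by
      rw [hpow, show ((-1:ℂ)) ^ m * ((-1:ℂ) ^ m * Complex.I * Z ^ (2 * m + 1))
        = Complex.I * Z ^ (2 * m + 1) from by
          linear_combination Complex.I * Z ^ (2 * m + 1) * hneg]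
    have hZp : Z ^ (2 * m + 1)
        = ((t ^ (2 * m + 1) / (1 + t ^ 2) ^ (2 * m + 1) : ℝ) : ℂ)
            * ((t : ℂ) + Complex.I) ^ (2 * m + 1) := by
      rw [hZ, div_pow, mul_pow]
      push_cast
      ring
    have him : (Z ^ (2 * m + 1)).im
        = t ^ (2 * m + 1) / (1 + t ^ 2) ^ (2 * m + 1)
            * (((t : ℂ) + Complex.I) ^ (2 * m + 1)).im := by
      rw [hZp, Complex.im_ofReal_mul]
    have hre : Complex.reCLM
        (-2 * ((-1) ^ m * (Complex.I * Z) ^ (2 * m + 1) / ((2 * m + 1 : ℕ) : ℂ)))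
        = 2 * (Z ^ (2 * m + 1)).im / (2 * (m:ℝ) + 1) := by
      have : Complex.reCLM (-2 * ((-1) ^ m * (Complex.I * Z) ^ (2 * m + 1) / ((2 * m + 1 : ℕ) : ℂ)))
          = (-2 * (Complex.I * Z ^ (2 * m + 1) / ((2 * m + 1 : ℕ) : ℂ))).re := by
        rw [show Complex.reCLM (-2 * ((-1) ^ m * (Complex.I * Z) ^ (2 * m + 1) / ((2 * m + 1 : ℕ) : ℂ)))
            = (-2 * ((-1) ^ m * (Complex.I * Z) ^ (2 * m + 1) / ((2 * m + 1 : ℕ) : ℂ))).re from rfl,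
          hterm]
      rw [this, mul_div_assoc, show ((2 * m + 1 : ℕ) : ℂ) = ((2 * (m:ℝ) + 1 : ℝ) : ℂ) by push_cast; ring,
        Complex.div_ofReal, Complex.mul_re]
      simp [Complex.I_re, Complex.I_im]
      ring
    rw [hre, him, aux_im]
    -- now a purely real computation
    have hshrink : ∑ n ∈ Finset.Icc 1 (2 * m + 1),
        (-1 : ℝ) ^ n / ((2 * (m : ℝ) + 1) * (1 + x ^ 2 / 4) ^ (2 * m + 1)) *
          (x / 2) ^ (4 * m + 3 - 2 * n) * (Nat.choose (2 * m + 1) (2 * n - 1) : ℝ)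
        = ∑ n ∈ Finset.Icc 1 (m + 1),
        (-1 : ℝ) ^ n / ((2 * (m : ℝ) + 1) * (1 + x ^ 2 / 4) ^ (2 * m + 1)) *
          (x / 2) ^ (4 * m + 3 - 2 * n) * (Nat.choose (2 * m + 1) (2 * n - 1) : ℝ) := by
      refine (Finset.sum_subset (Finset.Icc_subset_Icc le_rfl (by omega)) ?_).symm
      intro n hn hn'
      simp only [Finset.mem_Icc] at hn hn'
      have : (2 * m + 1).choose (2 * n - 1) = 0 := by
        apply Nat.choose_eq_zero_of_lt
        omega
      rw [this]
      simp
    rw [hshrink]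
    have hxt : 1 + x ^ 2 / 4 = 1 + t ^ 2 := by rw [hx2]; ring
    have hxt2 : x / 2 = t := ht.symm
    rw [hxt, hxt2, Finset.mul_sum, Finset.mul_sum, Finset.sum_div, Finset.mul_sum]
    refine Finset.sum_congr rfl ?_
    intro n hn
    simp only [Finset.mem_Icc] at hn
    rw [show 4 * m + 3 - 2 * n = (2 * m + 1) + (2 * m + 2 - 2 * n) by omega, pow_add]
    have hsign : ((-1 : ℝ)) ^ (n - 1) = -(-1 : ℝ) ^ n := by
      obtain ⟨n', rfl⟩ : ∃ n', n = n' + 1 := ⟨n - 1, by omega⟩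
      rw [pow_succ]
      simp
    have hrp : (0:ℝ) < (1 + t ^ 2) ^ (2 * m + 1) := by positivity
    have hc : (0:ℝ) < 2 * (m:ℝ) + 1 := by positivity
    rw [hsign]
    field_simp
    ring
  have hfun : (fun m : ℕ =>
      -2 * ∑ n ∈ Finset.Icc 1 (2 * m + 1),
        (-1 : ℝ) ^ n / ((2 * (m : ℝ) + 1) * (1 + x ^ 2 / 4) ^ (2 * m + 1)) *
          (x / 2) ^ (4 * m + 3 - 2 * n) * (Nat.choose (2 * m + 1) (2 * n - 1) : ℝ))
      = fun m : ℕ => Complex.reCLM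
        (-2 * ((-1) ^ m * (Complex.I * Z) ^ (2 * m + 1) / ((2 * m + 1 : ℕ) : ℂ))) :=
    funext fun m => (key m).symm
  rw [hfun]
  -- identify the sum
  have hval : Complex.reCLM (-2 * Complex.arctan (Complex.I * Z)) = Real.arctan x := by
    have hWI : Complex.I * Z * Complex.I = -Z := by
      have : Complex.I * Z * Complex.I = Complex.I ^ 2 * Z := by ring
      rw [this, Complex.I_sq]
      ring
    have h1Z : (1 : ℂ) + Z ≠ 0 := by
      intro hcon
      have hz1 : Z = -1 := by linear_combination hcon
      rw [hz1, norm_neg, norm_one] at habs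
      exact lt_irrefl 1 habs
    have hx0 : (1 : ℂ) + (x:ℂ) * Complex.I ≠ 0 := by
      intro hcon
      have h1 : ((1 : ℂ) + (x:ℂ) * Complex.I).re = 1 := by simp
      rw [hcon] at h1
      simp at h1
    have hu : (1 + Complex.I * Z * Complex.I) / (1 - Complex.I * Z * Complex.I)
        = ((1 : ℂ) + (x:ℂ) * Complex.I)⁻¹ := by
      rw [hWI, sub_neg_eq_add, ← sub_eq_add_neg]
      rw [div_eq_iff h1Z, inv_mul_eq_div, eq_div_iff hx0]
      rw [hZ, hx2]
      push_cast
      have hd : (1:ℂ) + (t:ℂ) ^ 2 ≠ 0 := by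
        have he : ((1:ℂ) + (t:ℂ) ^ 2) = ((1 + t ^ 2 : ℝ) : ℂ) := by push_cast; ring
        rw [he, ne_eq, Complex.ofReal_eq_zero]
        nlinarith [sq_nonneg t]
      field_simp
      linear_combination (-2 * (t:ℂ) ^ 2) * Complex.I_sq
    have harctan : (-2 : ℂ) * Complex.arctan (Complex.I * Z)
        = Complex.I * Complex.log (((1 : ℂ) + (x:ℂ) * Complex.I)⁻¹) := by
      rw [Complex.arctan, ← hu]
      ring
    have hargne : Complex.arg (1 + (x:ℂ) * Complex.I) ≠ Real.pi := by
      intro hpi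
      rw [Complex.arg_eq_pi_iff] at hpi
      simp at hpi
      exact absurd hpi.1 (by norm_num)
    have hre1 : (0:ℝ) < ((1 : ℂ) + (x:ℂ) * Complex.I).re := by
      have h1 : ((1 : ℂ) + (x:ℂ) * Complex.I).re = 1 := by simp
      rw [h1]; norm_num
    have harg : Complex.arg ((1 : ℂ) + (x:ℂ) * Complex.I) = Real.arctan x := by
      have htan : Real.tan (Complex.arg (1 + (x:ℂ) * Complex.I)) = x := by
        rw [Complex.tan_arg]
        simp
      have hb : |Complex.arg (1 + (x:ℂ) * Complex.I)| < Real.pi / 2 :=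
        Complex.abs_arg_lt_pi_div_two_iff.mpr (Or.inl hre1)
      rw [abs_lt] at hb
      have harg2 := Real.arctan_tan hb.1 hb.2
      rw [htan] at harg2
      exact harg2.symm
    calc Complex.reCLM (-2 * Complex.arctan (Complex.I * Z))
        = ((-2 : ℂ) * Complex.arctan (Complex.I * Z)).re := rfl
      _ = (Complex.I * Complex.log (((1 : ℂ) + (x:ℂ) * Complex.I)⁻¹)).re := by rw [harctan]
      _ = -(Complex.log (((1 : ℂ) + (x:ℂ) * Complex.I)⁻¹)).im := Complex.I_mul_re _
      _ = -Complex.arg (((1 : ℂ) + (x:ℂ) * Complex.I)⁻¹) := by rw [Complex.log_im]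
      _ = Real.arctan x := by
          rw [Complex.arg_inv, if_neg hargne, neg_neg, harg]
  rw [← hval]
  exact h2
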